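/- For all natural numbers n, all complex ρ and all complex β: Σ_{m=0}^{n} (-1)^{n-m} · C(n,m) · Σ_{j=0}^{m} C(m,j) · (1-ρ)^j · ρ^{m-j} · (β)^{(n-j)} · (β+m-j)^{(j)} equals 0 if n is odd, and equals (n!/(n/2)!) · (β)^{(n/2)} · (1-ρ)^{n/2} if n is even. -/

import Mathlib

open Finset Polynomial

lemma asc_eval_add (a b : ℕ) (x : ℂ) :
    (ascPochhammer ℂ (a + b)).eval x
      = (ascPochhammer ℂ a).eval x * (ascPochhammer ℂ b).eval (x + a) := by
  rw [← ascPochhammer_mul]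
  simp [Polynomial.eval_mul, Polynomial.eval_comp]

lemma asc_eval_pred (m : ℕ) (y : ℂ) :
    (ascPochhammer ℂ m).eval (y - 1)
      = (ascPochhammer ℂ m).eval y - (m : ℂ) * (ascPochhammer ℂ (m - 1)).eval y := by
  cases m with
  | zero => simp
  | succ m =>
      have h1 : (ascPochhammer ℂ (m + 1)).eval (y - 1)
          = (y - 1) * (ascPochhammer ℂ m).eval y := by
        rw [ascPochhammer_succ_left]
        simp [Polynomial.eval_comp]
      rw [h1, Nat.add_sub_cancel, ascPochhammer_succ_eval]
      push_cast
      ring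

lemma neg_one_pow_sub {p k : ℕ} (h : k ≤ p) : (-1 : ℂ) ^ (p - k) = (-1) ^ p * (-1) ^ k := by
  have h1 : (-1 : ℂ) ^ p = (-1) ^ (p - k) * (-1) ^ k := by
    rw [← pow_add, Nat.sub_add_cancel h]
  rw [h1, mul_assoc, ← mul_pow]
  norm_num

lemma alt_sum_choose (q : ℕ) :
    ∑ s ∈ range (q + 1), (-1 : ℂ) ^ s * (q.choose s : ℂ) = if q = 0 then 1 else 0 := by
  have h := Int.alternating_sum_range_choose (n := q)
  have h2 : ((∑ s ∈ range (q + 1), (-1 : ℤ) ^ s * (q.choose s : ℤ) : ℤ) : ℂ)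
      = ∑ s ∈ range (q + 1), (-1 : ℂ) ^ s * (q.choose s : ℂ) := by
    push_cast
    ring
  rw [← h2, h]
  split_ifs <;> simp

lemma U_eq (j : ℕ) (ρ : ℂ) : ∀ (p : ℕ) (β : ℂ),
    ∑ k ∈ range (p + 1), (p.choose k : ℂ) * ((-ρ) ^ k * (ascPochhammer ℂ j).eval (β + k))
      = ∑ b ∈ range (p + 1), (p.choose b : ℂ) *
          ((b.factorial : ℂ) * (j.choose b : ℂ) * (-1) ^ b * (1 - ρ) ^ (p - b)
            * (ascPochhammer ℂ (j - b)).eval (β + p)) := by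
  intro p
  induction p with
  | zero => intro β; simp
  | succ p ih =>
      intro β
      have hL := Finset.sum_choose_succ_mul
        (fun k _ => (-ρ) ^ k * (ascPochhammer ℂ j).eval (β + k)) p
      have hR := Finset.sum_choose_succ_mul
        (fun b s => (b.factorial : ℂ) * (j.choose b : ℂ) * (-1) ^ b * (1 - ρ) ^ s
            * (ascPochhammer ℂ (j - b)).eval (β + (p + 1 : ℕ))) p
      calc
        ∑ k ∈ range (p + 1 + 1), ((p + 1).choose k : ℂ) *
            ((-ρ) ^ k * (ascPochhammer ℂ j).eval (β + k))
            = (∑ k ∈ range (p + 1), (p.choose k : ℂ) *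
                ((-ρ) ^ k * (ascPochhammer ℂ j).eval (β + k))) +
              ∑ k ∈ range (p + 1), (p.choose k : ℂ) *
                ((-ρ) ^ (k + 1) * (ascPochhammer ℂ j).eval (β + (k + 1 : ℕ))) := hL
        _ = (∑ k ∈ range (p + 1), (p.choose k : ℂ) *
                ((-ρ) ^ k * (ascPochhammer ℂ j).eval (β + k))) +
              (-ρ) * ∑ k ∈ range (p + 1), (p.choose k : ℂ) *
                ((-ρ) ^ k * (ascPochhammer ℂ j).eval ((β + 1) + k)) := by
              rw [Finset.mul_sum]
              congr 1
              refine Finset.sum_congr rfl fun k hk => ?_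
              rw [show (β + ((k + 1 : ℕ) : ℂ)) = (β + 1) + (k : ℂ) by push_cast; ring]
              ring
        _ = (∑ b ∈ range (p + 1), (p.choose b : ℂ) *
                ((b.factorial : ℂ) * (j.choose b : ℂ) * (-1) ^ b * (1 - ρ) ^ (p - b)
                  * (ascPochhammer ℂ (j - b)).eval (β + p))) +
              (-ρ) * ∑ b ∈ range (p + 1), (p.choose b : ℂ) *
                ((b.factorial : ℂ) * (j.choose b : ℂ) * (-1) ^ b * (1 - ρ) ^ (p - b)
                  * (ascPochhammer ℂ (j - b)).eval ((β + 1) + p)) := by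
              rw [ih β, ih (β + 1)]
        _ = ∑ b ∈ range (p + 1 + 1), ((p + 1).choose b : ℂ) *
              ((b.factorial : ℂ) * (j.choose b : ℂ) * (-1) ^ b * (1 - ρ) ^ (p + 1 - b)
                * (ascPochhammer ℂ (j - b)).eval (β + (p + 1 : ℕ))) := by
              rw [hR, Finset.mul_sum, ← Finset.sum_add_distrib, ← Finset.sum_add_distrib]
              refine Finset.sum_congr rfl fun b hb => ?_
              have hbp : b ≤ p := Nat.lt_succ_iff.mp (Finset.mem_range.mp hb)
              have e1 : ((β + 1) + (p : ℂ)) = β + ((p + 1 : ℕ) : ℂ) := by push_cast; ring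
              have e2 : (β + (p : ℂ)) = (β + ((p + 1 : ℕ) : ℂ)) - 1 := by push_cast; ring
              have e3 : p + 1 - b = (p - b) + 1 := by omega
              have e4 : (((b + 1).factorial : ℂ) * (j.choose (b + 1) : ℂ))
                  = (b.factorial : ℂ) * (j.choose b : ℂ) * ((j - b : ℕ) : ℂ) := by
                have h0 : (b + 1).factorial * j.choose (b + 1)
                    = b.factorial * (j.choose (b + 1) * (b + 1)) := by
                  rw [Nat.factorial_succ]; ring
                have : (b + 1).factorial * j.choose (b + 1)
                    = b.factorial * j.choose b * (j - b) := by
                  rw [h0, Nat.choose_succ_right_eq, ← mul_assoc]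
                exact_mod_cast congrArg (Nat.cast : ℕ → ℂ) this
              have e5 : j - (b + 1) = j - b - 1 := by omega
              rw [e1, e2, asc_eval_pred, e3, e5, pow_succ]
              rw [show ((b + 1).factorial : ℂ) * (j.choose (b + 1) : ℂ) * (-1) ^ (b + 1)
                    * (1 - ρ) ^ (p - b) * (ascPochhammer ℂ (j - b - 1)).eval (β + ((p+1:ℕ):ℂ))
                  = (b.factorial : ℂ) * (j.choose b : ℂ) * ((j - b : ℕ) : ℂ) * (-1) ^ (b + 1)
                    * (1 - ρ) ^ (p - b) * (ascPochhammer ℂ (j - b - 1)).eval (β + ((p+1:ℕ):ℂ))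
                  from by rw [e4]]
              ring

theorem stmt_4 (n : ℕ) (ρ β : ℂ) :
    ∑ m ∈ range (n + 1),
        (-1 : ℂ) ^ (n - m) * (n.choose m : ℂ) *
          ∑ j ∈ range (m + 1),
            (m.choose j : ℂ) * (1 - ρ) ^ j * ρ ^ (m - j) *
              (ascPochhammer ℂ (n - j)).eval β *
              (ascPochhammer ℂ j).eval (β + (m : ℂ) - (j : ℂ)) =
      if Odd n then 0
      else (n.factorial : ℂ) / ((n / 2).factorial : ℂ) * (ascPochhammer ℂ (n / 2)).eval β *
        (1 - ρ) ^ (n / 2) := by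
  calc
    ∑ m ∈ range (n + 1),
        (-1 : ℂ) ^ (n - m) * (n.choose m : ℂ) *
          ∑ j ∈ range (m + 1),
            (m.choose j : ℂ) * (1 - ρ) ^ j * ρ ^ (m - j) *
              (ascPochhammer ℂ (n - j)).eval β *
              (ascPochhammer ℂ j).eval (β + (m : ℂ) - (j : ℂ))
        = ∑ m ∈ range (n + 1), ∑ j ∈ range (n + 1),
            (-1 : ℂ) ^ (n - m) * (n.choose m : ℂ) *
              ((m.choose j : ℂ) * (1 - ρ) ^ j * ρ ^ (m - j) *
                (ascPochhammer ℂ (n - j)).eval β *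
                (ascPochhammer ℂ j).eval (β + (m : ℂ) - (j : ℂ))) := by
          refine Finset.sum_congr rfl fun m hm => ?_
          rw [Finset.mul_sum]
          refine Finset.sum_subset (Finset.range_subset_range.2 (by
            have := Finset.mem_range.mp hm; omega)) (fun j hj hnj => ?_)
          have hmj : m < j := by
            simp only [Finset.mem_range, not_lt] at hnj; omega
          simp [Nat.choose_eq_zero_of_lt hmj]
    _ = ∑ j ∈ range (n + 1), ∑ m ∈ range (n + 1),
            (-1 : ℂ) ^ (n - m) * (n.choose m : ℂ) *
              ((m.choose j : ℂ) * (1 - ρ) ^ j * ρ ^ (m - j) *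
                (ascPochhammer ℂ (n - j)).eval β *
                (ascPochhammer ℂ j).eval (β + (m : ℂ) - (j : ℂ))) := Finset.sum_comm
    _ = ∑ j ∈ range (n + 1),
          ((-1 : ℂ) ^ (n - j) * (n.choose j : ℂ) * (1 - ρ) ^ j *
              (ascPochhammer ℂ (n - j)).eval β) *
            ∑ k ∈ range ((n - j) + 1), ((n - j).choose k : ℂ) *
              ((-ρ) ^ k * (ascPochhammer ℂ j).eval (β + k)) := by
          refine Finset.sum_congr rfl fun j hj => ?_
          have hjn : j ≤ n := by have := Finset.mem_range.mp hj; omega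
          rw [Finset.mul_sum]
          have hsub : Finset.Ico j (n + 1) ⊆ range (n + 1) := by
            rw [Finset.range_eq_Ico]
            exact Finset.Ico_subset_Ico (Nat.zero_le _) le_rfl
          have hvan : ∀ m ∈ range (n + 1), m ∉ Finset.Ico j (n + 1) →
              (-1 : ℂ) ^ (n - m) * (n.choose m : ℂ) *
                ((m.choose j : ℂ) * (1 - ρ) ^ j * ρ ^ (m - j) *
                  (ascPochhammer ℂ (n - j)).eval β *
                  (ascPochhammer ℂ j).eval (β + (m : ℂ) - (j : ℂ))) = 0 := by
            intro m hm hnm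
            have hmj : m < j := by
              simp only [Finset.mem_Ico, Finset.mem_range, not_and, not_lt] at hm hnm
              omega
            simp [Nat.choose_eq_zero_of_lt hmj]
          rw [← Finset.sum_subset hsub hvan, Finset.sum_Ico_eq_sum_range,
            show n + 1 - j = (n - j) + 1 by omega]
          refine Finset.sum_congr rfl fun k hk => ?_
          have hk' : k ≤ n - j := by have := Finset.mem_range.mp hk; omega
          have h1 : n - (j + k) = (n - j) - k := by omega
          have h2 : j + k - j = k := by omega
          have h3 : (β + ((j + k : ℕ) : ℂ) - (j : ℂ)) = β + (k : ℂ) := by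
            push_cast; ring
          have h4 : (n.choose (j + k) : ℂ) * ((j + k).choose j : ℂ)
              = (n.choose j : ℂ) * ((n - j).choose k : ℂ) := by
            have h := Nat.choose_mul (n := n) (show j ≤ j + k by omega)
            rw [h2] at h
            exact_mod_cast congrArg (Nat.cast : ℕ → ℂ) h
          rw [h1, h2, h3, neg_one_pow_sub hk', neg_pow ρ k]
          linear_combination ((-1 : ℂ) ^ (n - j) * (-1) ^ k * (1 - ρ) ^ j * ρ ^ k *
            (ascPochhammer ℂ (n - j)).eval β * (ascPochhammer ℂ j).eval (β + (k : ℂ))) * h4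
    _ = ∑ j ∈ range (n + 1), ∑ b ∈ range (n + 1),
          (-1 : ℂ) ^ ((n - j) + b) *
            ((b.factorial : ℂ) * (n.choose j : ℂ) * (j.choose b : ℂ) * ((n - j).choose b : ℂ)) *
            ((1 - ρ) ^ j * (1 - ρ) ^ (n - j - b)) *
            (ascPochhammer ℂ (n - b)).eval β := by
          refine Finset.sum_congr rfl fun j hj => ?_
          have hjn : j ≤ n := by have := Finset.mem_range.mp hj; omega
          rw [U_eq j ρ (n - j) β, Finset.mul_sum]
          have hstep : ∀ b ∈ range ((n - j) + 1),
              ((-1 : ℂ) ^ (n - j) * (n.choose j : ℂ) * (1 - ρ) ^ j *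
                  (ascPochhammer ℂ (n - j)).eval β) *
                (((n - j).choose b : ℂ) *
                  ((b.factorial : ℂ) * (j.choose b : ℂ) * (-1) ^ b * (1 - ρ) ^ (n - j - b)
                    * (ascPochhammer ℂ (j - b)).eval (β + (n - j : ℕ))))
              = (-1 : ℂ) ^ ((n - j) + b) *
                  ((b.factorial : ℂ) * (n.choose j : ℂ) * (j.choose b : ℂ) *
                    ((n - j).choose b : ℂ)) *
                  ((1 - ρ) ^ j * (1 - ρ) ^ (n - j - b)) *
                  (ascPochhammer ℂ (n - b)).eval β := by
            intro b hb
            by_cases hbj : b ≤ j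
            · rw [show n - b = (n - j) + (j - b) by omega, asc_eval_add, pow_add]
              ring
            · have hjb : j < b := lt_of_not_ge hbj
              simp [Nat.choose_eq_zero_of_lt hjb]
          rw [Finset.sum_congr rfl hstep]
          refine Finset.sum_subset (Finset.range_subset_range.2 (by omega)) (fun b hb hnb => ?_)
          have hbj : n - j < b := by
            simp only [Finset.mem_range, not_lt] at hnb
            omega
          simp [Nat.choose_eq_zero_of_lt hbj]
    _ = ∑ b ∈ range (n + 1), ∑ j ∈ range (n + 1),
          (-1 : ℂ) ^ ((n - j) + b) *
            ((b.factorial : ℂ) * (n.choose j : ℂ) * (j.choose b : ℂ) * ((n - j).choose b : ℂ)) *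
            ((1 - ρ) ^ j * (1 - ρ) ^ (n - j - b)) *
            (ascPochhammer ℂ (n - b)).eval β := Finset.sum_comm
    _ = ∑ b ∈ range (n + 1),
          (if n = 2 * b then
            (b.factorial : ℂ) * (n.choose b : ℂ) * (1 - ρ) ^ (n - b) *
              (ascPochhammer ℂ (n - b)).eval β
          else 0) := by
          refine Finset.sum_congr rfl fun b hb => ?_
          have hbn : b ≤ n := by have := Finset.mem_range.mp hb; omega
          rcases le_or_gt (2 * b) n with h2 | h2
          · have hsub : Finset.Ico b (n - b + 1) ⊆ range (n + 1) := by
              rw [Finset.range_eq_Ico]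
              exact Finset.Ico_subset_Ico (Nat.zero_le _) (by omega)
            have hvan : ∀ x ∈ range (n + 1), x ∉ Finset.Ico b (n - b + 1) →
                (-1 : ℂ) ^ ((n - x) + b) *
                  ((b.factorial : ℂ) * (n.choose x : ℂ) * (x.choose b : ℂ) *
                    ((n - x).choose b : ℂ)) *
                  ((1 - ρ) ^ x * (1 - ρ) ^ (n - x - b)) *
                  (ascPochhammer ℂ (n - b)).eval β = 0 := by
              intro x hx hnx
              simp only [Finset.mem_Ico, Finset.mem_range, not_and, not_lt] at hx hnx
              rcases lt_or_ge x b with h | h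
              · simp [Nat.choose_eq_zero_of_lt h]
              · have hxb : n - x < b := by have := hnx h; omega
                simp [Nat.choose_eq_zero_of_lt hxb]
            rw [← Finset.sum_subset hsub hvan, Finset.sum_Ico_eq_sum_range,
              show n - b + 1 - b = n - 2 * b + 1 by omega]
            have key : ∀ s ∈ range (n - 2 * b + 1),
                (-1 : ℂ) ^ ((n - (b + s)) + b) *
                  ((b.factorial : ℂ) * (n.choose (b + s) : ℂ) * ((b + s).choose b : ℂ) *
                    ((n - (b + s)).choose b : ℂ)) *
                  ((1 - ρ) ^ (b + s) * (1 - ρ) ^ (n - (b + s) - b)) *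
                  (ascPochhammer ℂ (n - b)).eval β
                = ((-1 : ℂ) ^ s * ((n - 2 * b).choose s : ℂ)) *
                    ((-1 : ℂ) ^ n * ((b.factorial : ℂ) * (n.choose b : ℂ) *
                      ((n - b).choose b : ℂ)) * (1 - ρ) ^ (n - b) *
                      (ascPochhammer ℂ (n - b)).eval β) := by
              intro s hs
              have hs' : s ≤ n - 2 * b := by have := Finset.mem_range.mp hs; omega
              have e1 : n - (b + s) + b = n - s := by omega
              have e4 : (1 - ρ) ^ (b + s) * (1 - ρ) ^ (n - (b + s) - b)
                  = (1 - ρ) ^ (n - b) := by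
                rw [← pow_add, show b + s + (n - (b + s) - b) = n - b by omega]
              have hA : n.choose (b + s) * (b + s).choose b
                  = n.choose b * (n - b).choose s := by
                have h := Nat.choose_mul (n := n)
                  (show b ≤ b + s by omega)
                rw [Nat.add_sub_cancel_left] at h
                exact h
              have hB : (n - b).choose s * (n - (b + s)).choose b
                  = (n - b).choose b * (n - 2 * b).choose s := by
                have h1 := Nat.choose_mul (n := n - b)
                  (show s ≤ s + b by omega)
                rw [Nat.add_sub_cancel_left,
                  show n - b - s = n - (b + s) by omega] at h1
                have h2 := Nat.choose_mul (n := n - b)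
                  (show b ≤ b + s by omega)
                rw [Nat.add_sub_cancel_left,
                  show n - b - b = n - 2 * b by omega] at h2
                calc (n - b).choose s * (n - (b + s)).choose b
                    = (n - b).choose (s + b) * (s + b).choose s := h1.symm
                  _ = (n - b).choose (b + s) * (b + s).choose b := by
                      rw [Nat.choose_symm_add, Nat.add_comm s b]
                  _ = (n - b).choose b * (n - 2 * b).choose s := h2
              have hC : n.choose (b + s) * (b + s).choose b * (n - (b + s)).choose b
                  = n.choose b * ((n - b).choose b * (n - 2 * b).choose s) := by
                rw [hA, mul_assoc, hB]
              have hCc : (n.choose (b + s) : ℂ) * ((b + s).choose b : ℂ) *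
                  ((n - (b + s)).choose b : ℂ)
                  = (n.choose b : ℂ) * (((n - b).choose b : ℂ) *
                    ((n - 2 * b).choose s : ℂ)) := by
                exact_mod_cast congrArg (Nat.cast : ℕ → ℂ) hC
              rw [e1, e4, neg_one_pow_sub (show s ≤ n by omega)]
              linear_combination ((-1 : ℂ) ^ n * (-1) ^ s * (b.factorial : ℂ) *
                (1 - ρ) ^ (n - b) * (ascPochhammer ℂ (n - b)).eval β) * hCc
            rw [Finset.sum_congr rfl key, ← Finset.sum_mul, alt_sum_choose]
            by_cases hnb2 : n = 2 * b
            · rw [if_pos (by omega), if_pos hnb2]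
              subst hnb2
              rw [show 2 * b - b = b by omega, Nat.choose_self,
                show ((-1 : ℂ)) ^ (2 * b) = 1 by rw [pow_mul]; norm_num]
              push_cast
              ring
            · rw [if_neg (by omega), if_neg hnb2, zero_mul]
          · rw [if_neg (by omega)]
            refine Finset.sum_eq_zero fun x hx => ?_
            rcases lt_or_ge x b with h | h
            · simp [Nat.choose_eq_zero_of_lt h]
            · have hxb : n - x < b := by omega
              simp [Nat.choose_eq_zero_of_lt hxb]
    _ = if Odd n then 0
        else (n.factorial : ℂ) / ((n / 2).factorial : ℂ) * (ascPochhammer ℂ (n / 2)).eval β *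
          (1 - ρ) ^ (n / 2) := by
          rcases Nat.even_or_odd n with he | ho
          · rw [if_neg (Nat.not_odd_iff_even.mpr he)]
            obtain ⟨k, hk⟩ := he
            have hsum : ∀ b ∈ range (n + 1),
                (if n = 2 * b then
                  (b.factorial : ℂ) * (n.choose b : ℂ) * (1 - ρ) ^ (n - b) *
                    (ascPochhammer ℂ (n - b)).eval β
                else 0)
                = (if b = k then
                  (b.factorial : ℂ) * (n.choose b : ℂ) * (1 - ρ) ^ (n - b) *
                    (ascPochhammer ℂ (n - b)).eval β
                else 0) := by
              intro b _
              exact if_congr (by omega) rfl rfl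
            rw [Finset.sum_congr rfl hsum, Finset.sum_ite_eq' (range (n + 1)) k,
              if_pos (Finset.mem_range.2 (by omega))]
            have hk2 : n / 2 = k := by omega
            have hnk : n - k = k := by omega
            rw [hk2, hnk]
            have hfac : (n.choose k : ℂ) * (k.factorial : ℂ) * (k.factorial : ℂ)
                = (n.factorial : ℂ) := by
              have h := Nat.choose_mul_factorial_mul_factorial (show k ≤ n by omega)
              rw [hnk] at h
              exact_mod_cast congrArg (Nat.cast : ℕ → ℂ) h
            have hne : (k.factorial : ℂ) ≠ 0 :=
              Nat.cast_ne_zero.2 (Nat.factorial_ne_zero k)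
            field_simp
            linear_combination ((1 - ρ) ^ k * (ascPochhammer ℂ k).eval β) * hfac
          · rw [if_pos ho]
            refine Finset.sum_eq_zero fun b hb => ?_
            rw [if_neg (by rcases ho with ⟨k, hk⟩; omega)]
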